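/- Let μ_1, …, μ_J be real numbers and set S = [min_j μ_j, max_j μ_j]. Let (Y_k)_{k≥1} be independent identically distributed real random variables with P(Y_1 ∈ S) > 0. For each k define the random set A_k = { n ∈ ℝ : n² ≤ 2n(μ_j − Y_k) for all j = 1,…,J }. Then with probability one, ⋂_{k≥1} A_k = {0}. (Large Sample GMM- and CMM-NEM Theorem.) -/

import Mathlib

open MeasureTheory ProbabilityTheory

lemma nem_set_eq_zero (J : ℕ) (hJ : 0 < J) (μ : Fin J → ℝ) {y : ℝ}
    (hy : y ∈ Set.Icc (⨅ j, μ j) (⨆ j, μ j)) :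
    {n : ℝ | ∀ j, n ^ 2 ≤ 2 * n * (μ j - y)} = ({0} : Set ℝ) := by
  have : Nonempty (Fin J) := ⟨⟨0, hJ⟩⟩
  ext n
  simp only [Set.mem_setOf_eq, Set.mem_singleton_iff]
  constructor
  · intro h
    obtain ⟨j0, hj0⟩ := exists_eq_ciInf_of_finite (f := μ)
    obtain ⟨j1, hj1⟩ := exists_eq_ciSup_of_finite (f := μ)
    have h0 := h j0
    have h1 := h j1
    have ha : μ j0 ≤ y := hj0 ▸ hy.1
    have hb : y ≤ μ j1 := hj1 ▸ hy.2
    have hsq : n ^ 2 ≤ 0 := by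
      rcases le_or_gt n 0 with hn | hn
      · nlinarith
      · nlinarith
    nlinarith [sq_nonneg n]
  · rintro rfl j; simp

/-- **Large Sample GMM- and CMM-NEM Theorem.** -/
theorem large_sample_gmm_cmm_nem
    {Ω : Type*} [MeasurableSpace Ω] (P : Measure Ω) [IsProbabilityMeasure P]
    (J : ℕ) (hJ : 0 < J) (μ : Fin J → ℝ)
    (Y : ℕ → Ω → ℝ) (hmeas : ∀ k, Measurable (Y k))
    (hindep : iIndepFun Y P)
    (hident : ∀ k, IdentDistrib (Y k) (Y 0) P P)
    (hS : 0 < P {ω | Y 0 ω ∈ Set.Icc (⨅ j, μ j) (⨆ j, μ j)}) :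
    ∀ᵐ ω ∂P,
      (⋂ k : ℕ, {n : ℝ | ∀ j, n ^ 2 ≤ 2 * n * (μ j - Y k ω)}) = ({0} : Set ℝ) := by
  set S : Set ℝ := Set.Icc (⨅ j, μ j) (⨆ j, μ j) with hSdef
  have hSm : MeasurableSet S := measurableSet_Icc
  set s : ℕ → Set Ω := fun k => Y k ⁻¹' S with hsdef
  have hsm : ∀ k, MeasurableSet (s k) := fun k => (hmeas k) hSm
  -- each s k has the same positive probability
  have hps : ∀ k, P (s k) = P (s 0) := by
    intro k
    have := (hident k).measure_mem_eq hSm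
    simpa [s, Set.preimage] using this
  have hp0 : P (s 0) ≠ 0 := by
    intro h
    rw [show s 0 = {ω | Y 0 ω ∈ S} from rfl] at h
    exact absurd h (ne_of_gt hS)
  -- independence of the events
  have hind : iIndepSet s P := by
    rw [iIndepSet_iff_iIndepSets_singleton hsm, iIndepSets_singleton_iff]
    intro t
    have := hindep.measure_inter_preimage_eq_mul t (sets := fun _ => S)
      (fun i _ => hSm)
    simpa [s] using this
  -- second Borel–Cantelli
  have htop : ∑' k, P (s k) = ⊤ := by
    simp_rw [hps]
    exact ENNReal.tsum_const_eq_top_of_ne_zero hp0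
  have hlim : P (Filter.limsup s Filter.atTop) = 1 :=
    measure_limsup_eq_one hsm hind htop
  have hae : ∀ᵐ ω ∂P, ω ∈ Filter.limsup s Filter.atTop := by
    have hc : P (Filter.limsup s Filter.atTop)ᶜ = 0 :=
      (prob_compl_eq_zero_iff
        (MeasurableSet.measurableSet_limsup fun n => hsm n)).mpr hlim
    rw [ae_iff]
    exact hc
  filter_upwards [hae] with ω hω
  rw [Filter.mem_limsup_iff_frequently_mem] at hω
  obtain ⟨k, hk⟩ := hω.exists
  apply subset_antisymm
  · refine (Set.iInter_subset _ k).trans ?_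
    rw [nem_set_eq_zero J hJ μ hk]
  · rintro n rfl
    simp only [Set.mem_iInter, Set.mem_setOf_eq]
    intro k j; simp
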